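/- If a > α + 1, then the sequence {k + a}_{k=0}^∞ is not an L^{(α)}-multiplier sequence. -/

import Mathlib

open Polynomial

/-- The generalized Laguerre polynomial `L_n^{(α)}(x) = ∑_{k=0}^n binom(n+α, n-k) (-x)^k / k!`. -/
noncomputable def Laguerre (α : ℝ) (n : ℕ) : Polynomial ℝ :=
  ∑ k ∈ Finset.range (n + 1),
    Polynomial.C ((∏ i ∈ Finset.range (n - k), ((n : ℝ) + α - i)) / (Nat.factorial (n - k)) *
      (-1) ^ k / (Nat.factorial k)) * Polynomial.X ^ k

/-- A real polynomial has only real zeros (with the convention that the zero polynomial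
is considered to have only real zeros). -/
def RealRooted (p : Polynomial ℝ) : Prop :=
  p = 0 ∨ ∀ z : ℂ, Polynomial.aeval z p = 0 → z.im = 0

/-- A sequence `γ` is an `L^{(α)}`-multiplier sequence if the linear operator determined by
`T[L_n^{(α)}] = γ_n L_n^{(α)}` maps polynomials with only real zeros to polynomials with
only real zeros. -/
def IsLaguerreMS (α : ℝ) (γ : ℕ → ℝ) : Prop :=
  ∃ T : Polynomial ℝ →ₗ[ℝ] Polynomial ℝ,
    (∀ n, T (Laguerre α n) = γ n • Laguerre α n) ∧
    ∀ p : Polynomial ℝ, RealRooted p → RealRooted (T p)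

/-- Coefficient of the Laguerre polynomial. -/
noncomputable def lagC (α : ℝ) (n k : ℕ) : ℝ :=
  (∏ i ∈ Finset.range (n - k), ((n : ℝ) + α - i)) / (Nat.factorial (n - k)) *
      (-1) ^ k / (Nat.factorial k)

lemma laguerre_coeff (α : ℝ) (n k : ℕ) :
    (Laguerre α n).coeff k = if k ≤ n then lagC α n k else 0 := by
  unfold Laguerre lagC
  rw [finset_sum_coeff]
  simp only [coeff_C_mul, coeff_X_pow, mul_ite, mul_one, mul_zero]
  rw [Finset.sum_ite_eq (Finset.range (n+1)) k]
  simp [Nat.lt_succ_iff]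

lemma laguerre_coeff_rec (α : ℝ) (n k : ℕ) :
    ((k:ℝ)+1) * ((k:ℝ)+α+1) * (Laguerre α n).coeff (k+1)
      = ((k:ℝ) - n) * (Laguerre α n).coeff k := by
  rw [laguerre_coeff, laguerre_coeff]
  rcases lt_trichotomy k n with h | h | h
  · rw [if_pos (by omega), if_pos (by omega)]
    obtain ⟨m, rfl⟩ : ∃ m, n = k + 1 + m := ⟨n - (k+1), by omega⟩
    unfold lagC
    have e1 : k + 1 + m - (k + 1) = m := by omega
    have e2 : k + 1 + m - k = m + 1 := by omega
    rw [e1, e2, Finset.prod_range_succ, Nat.factorial_succ, Nat.factorial_succ]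
    have hfm : ((Nat.factorial m : ℝ)) ≠ 0 := Nat.cast_ne_zero.2 (Nat.factorial_ne_zero m)
    have hfk : ((Nat.factorial k : ℝ)) ≠ 0 := Nat.cast_ne_zero.2 (Nat.factorial_ne_zero k)
    push_cast
    field_simp
    ring
  · subst h
    rw [if_neg (by omega), if_pos le_rfl]
    simp
  · rw [if_neg (by omega), if_neg (by omega)]
    simp

/-- The differential operator `p ↦ a p - (x p'' + (α+1-x) p')`. -/
noncomputable def Dop (α a : ℝ) : Polynomial ℝ →ₗ[ℝ] Polynomial ℝ where
  toFun p := a • p - (X * derivative (derivative p) + (C (α+1) - X) * derivative p)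
  map_add' p q := by
    simp only [derivative_add, smul_add]
    ring
  map_smul' c p := by
    simp only [derivative_smul, smul_sub, smul_add, mul_smul_comm, smul_comm c a,
      RingHom.id_apply]

lemma Dop_apply (α a : ℝ) (p : Polynomial ℝ) :
    Dop α a p = a • p - (X * derivative (derivative p) + (C (α+1) - X) * derivative p) := rfl

lemma Dop_laguerre (α a : ℝ) (n : ℕ) :
    Dop α a (Laguerre α n) = ((n:ℝ) + a) • Laguerre α n := by
  rw [Dop_apply]
  ext k
  simp only [coeff_sub, coeff_add, coeff_smul, smul_eq_mul, sub_mul, coeff_C_mul]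
  cases k with
  | zero =>
    have h := laguerre_coeff_rec α n 0
    simp only [mul_coeff_zero, coeff_X_zero, zero_mul, coeff_derivative] at *
    push_cast at h ⊢
    linear_combination -h
  | succ k =>
    have h1 := laguerre_coeff_rec α n (k+1)
    simp only [coeff_X_mul, coeff_derivative] at *
    push_cast at h1 ⊢
    linear_combination -h1

lemma laguerre_natDegree_le (α : ℝ) (n : ℕ) : (Laguerre α n).natDegree ≤ n := by
  rw [Polynomial.natDegree_le_iff_coeff_eq_zero]
  intro m hm
  rw [laguerre_coeff, if_neg (by omega)]

lemma laguerre_coeff_self (α : ℝ) (n : ℕ) :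
    (Laguerre α n).coeff n = (-1)^n / (Nat.factorial n) := by
  rw [laguerre_coeff, if_pos le_rfl]
  simp [lagC]

lemma T_eq_Dop (α a : ℝ) (T : Polynomial ℝ →ₗ[ℝ] Polynomial ℝ)
    (hT : ∀ n, T (Laguerre α n) = ((n:ℝ) + a) • Laguerre α n) (p : Polynomial ℝ) :
    T p = Dop α a p := by
  have key : ∀ N : ℕ, ∀ p : Polynomial ℝ, p.natDegree ≤ N → T p = Dop α a p := by
    intro N
    induction N with
    | zero =>
      intro p hp
      have hL0 : Laguerre α 0 = 1 := by
        unfold Laguerre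
        simp
      have h1 : T 1 = a • (1 : Polynomial ℝ) := by simpa [hL0] using hT 0
      have h2 : Dop α a 1 = a • (1 : Polynomial ℝ) := by
        simpa [hL0] using Dop_laguerre α a 0
      have hp0 : p = (p.coeff 0) • (1 : Polynomial ℝ) := by
        rw [Polynomial.eq_C_of_natDegree_le_zero hp]
        simp [Polynomial.smul_eq_C_mul]
      rw [hp0, map_smul, map_smul, h1, h2]
    | succ N ih =>
      intro p hp
      have hLc : (Laguerre α (N+1)).coeff (N+1) ≠ 0 := by
        rw [laguerre_coeff_self]
        exact div_ne_zero (pow_ne_zero _ (by norm_num))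
          (Nat.cast_ne_zero.2 (Nat.factorial_ne_zero _))
      set c : ℝ := p.coeff (N+1) / (Laguerre α (N+1)).coeff (N+1) with hc
      have hq : (p - c • Laguerre α (N+1)).natDegree ≤ N := by
        rw [Polynomial.natDegree_le_iff_coeff_eq_zero]
        intro m hm
        rw [coeff_sub, coeff_smul, smul_eq_mul]
        rcases eq_or_lt_of_le (Nat.succ_le_of_lt hm) with h | h
        · rw [← h, hc, div_mul_cancel₀ _ hLc, sub_self]
        · rw [Polynomial.natDegree_le_iff_coeff_eq_zero.mp hp m h,
            Polynomial.natDegree_le_iff_coeff_eq_zero.mp (laguerre_natDegree_le α (N+1)) m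
              (by omega)]
          simp
      have hsplit : p = (p - c • Laguerre α (N+1)) + c • Laguerre α (N+1) := by
        rw [sub_add_cancel]
      rw [hsplit, map_add, map_add, map_smul, map_smul, ih _ hq, hT (N+1),
        Dop_laguerre α a (N+1)]
  exact key p.natDegree p le_rfl

/-- If `a > α + 1`, then `{k + a}` is not an `L^{(α)}`-multiplier sequence. -/
theorem linear_not_laguerre_ms_of_gt (α a : ℝ) (hα : -1 < α) (ha : a > α + 1) :
    ¬ IsLaguerreMS α (fun k => (k : ℝ) + a) := by
  rintro ⟨T, hT, hpres⟩
  have hT' : ∀ n : ℕ, T (Laguerre α n) = ((n:ℝ) + a) • Laguerre α n := fun n => hT n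
  have hTeq : ∀ p, T p = Dop α a p := T_eq_Dop α a T hT'
  have hd : 0 < a - α - 1 := by linarith
  have ha0 : 0 < a := by linarith
  obtain ⟨m, hm0⟩ : ∃ m : ℕ, a < ((m:ℝ) + 2) * (a - α - 1) := by
    obtain ⟨m, hm'⟩ := exists_nat_gt (a / (a - α - 1))
    refine ⟨m, ?_⟩
    have h2 := (div_lt_iff₀ hd).mp hm'
    nlinarith
  obtain ⟨nn, hnn⟩ : ∃ x : ℝ, x = (m:ℝ) + 2 := ⟨_, rfl⟩
  have hm : a < nn * (a - α - 1) := by rw [hnn]; exact hm0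
  have hnn0 : (0:ℝ) < nn := by rw [hnn]; positivity
  have hαn : 0 < α + nn := by
    have : (0:ℝ) ≤ (m:ℝ) := Nat.cast_nonneg m
    rw [hnn]; linarith
  obtain ⟨E, hE⟩ : ∃ x : ℝ, x = 2*a*(nn-1) + nn*(nn - α - 2) := ⟨_, rfl⟩
  obtain ⟨t, htn⟩ : ∃ t : ℝ, nn * t = -E := ⟨-E/nn, by field_simp⟩
  obtain ⟨A, hA⟩ : ∃ x : ℝ, x = a + nn := ⟨_, rfl⟩
  obtain ⟨B, hB⟩ : ∃ x : ℝ, x = -(2*a+nn)*t - nn*(α+nn) := ⟨_, rfl⟩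
  obtain ⟨C0, hC0⟩ : ∃ x : ℝ, x = a*t^2 + nn*(α+1)*t := ⟨_, rfl⟩
  have hApos : 0 < A := by rw [hA]; linarith
  have hEpos : nn*(α+nn) < E := by rw [hE]; nlinarith
  have hD : B^2 - 4*A*C0 < 0 := by
    have key : B^2 - 4*A*C0 = nn^2*(α+nn)^2 - E^2 + ((nn*t)^2 + 2*E*(nn*t) + E^2) := by
      rw [hB, hC0, hA, hE]; ring
    rw [key, htn]
    nlinarith [hEpos, mul_pos hnn0 hαn]
  obtain ⟨y0, hy0⟩ : ∃ x : ℝ, x = Real.sqrt (4*A*C0 - B^2) := ⟨_, rfl⟩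
  have hy0pos : 0 < y0 := by rw [hy0]; exact Real.sqrt_pos.2 (by linarith)
  have y0sq : y0^2 = 4*A*C0 - B^2 := by rw [hy0]; exact Real.sq_sqrt (by linarith)
  have h2A : (2*A) ≠ 0 := by positivity
  obtain ⟨x0, hx0⟩ : ∃ x : ℝ, 2*A*x = -B := ⟨-B/(2*A), by field_simp⟩
  obtain ⟨y1, hy1⟩ : ∃ x : ℝ, 2*A*x = y0 := ⟨y0/(2*A), by field_simp⟩
  have hy1pos : 0 < y1 := by nlinarith
  have hre : A*(x0^2 - y1^2) + B*x0 + C0 = 0 := by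
    have h4 : 4*A*(A*(x0^2 - y1^2) + B*x0 + C0) = 0 := by
      linear_combination (2*A*x0 + B) * hx0 - (2*A*y1 + y0) * hy1 - y0sq
    rcases mul_eq_zero.mp h4 with h | h
    · exact absurd h (by positivity)
    · exact h
  have him : A*(2*x0*y1) + B*y1 = 0 := by linear_combination y1 * hx0
  set z : ℂ := (x0:ℂ) + (y1:ℂ)*Complex.I with hz
  have hzim : z.im = y1 := by simp [hz]
  have hQz : (A:ℂ)*z^2 + (B:ℂ)*z + (C0:ℂ) = 0 := by
    have expand : (A:ℂ)*z^2 + (B:ℂ)*z + (C0:ℂ)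
        = ((A*(x0^2 - y1^2) + B*x0 + C0 : ℝ) : ℂ)
          + ((A*(2*x0*y1) + B*y1 : ℝ) : ℂ) * Complex.I := by
      rw [hz]; push_cast
      linear_combination ((A:ℂ)*(y1:ℂ)^2) * Complex.I_sq
    rw [expand, hre, him]; simp
  set p : Polynomial ℝ := (X - Polynomial.C t)^(m+2) with hp
  have hd1 : derivative p = Polynomial.C ((m:ℝ)+2) * (X - Polynomial.C t)^(m+1) := by
    rw [hp, derivative_pow, derivative_sub, derivative_X, derivative_C, sub_zero, mul_one]
    norm_num
  have hd2 : derivative (derivative p)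
      = Polynomial.C (((m:ℝ)+2)*((m:ℝ)+1)) * (X - Polynomial.C t)^m := by
    rw [hd1, derivative_C_mul, derivative_pow, derivative_sub, derivative_X, derivative_C,
      sub_zero, mul_one, C_mul]
    push_cast
    ring
  have heval : ∀ w : ℂ, (Polynomial.aeval w) (Dop α a p)
      = (w - (t:ℂ))^m * ((a:ℂ)*(w - (t:ℂ))^2
        + ((m:ℂ)+2)*(w - ((α:ℂ)+1))*(w - (t:ℂ)) - ((m:ℂ)+2)*((m:ℂ)+1)*w) := by
    intro w
    rw [Dop_apply, hd2, hd1, hp]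
    simp only [map_sub, map_add, map_mul, map_pow, map_smul, aeval_X, aeval_C,
      Complex.real_smul, Complex.coe_algebraMap]
    push_cast
    ring
  have hQform : ∀ w : ℂ, (a:ℂ)*(w - (t:ℂ))^2 + ((m:ℂ)+2)*(w - ((α:ℂ)+1))*(w - (t:ℂ))
      - ((m:ℂ)+2)*((m:ℂ)+1)*w = (A:ℂ)*w^2 + (B:ℂ)*w + (C0:ℂ) := by
    intro w
    rw [hA, hB, hC0, hnn]
    push_cast
    ring
  have hQtpos : 0 < A*(t+1)^2 + B*(t+1) + C0 := by
    nlinarith [sq_nonneg (2*A*(t+1) + B)]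
  have hTp0 : T p ≠ 0 := by
    intro h0
    have h1 : (0:ℂ) = ((t:ℂ)+1 - (t:ℂ))^m * ((A:ℂ)*((t:ℂ)+1)^2 + (B:ℂ)*((t:ℂ)+1) + (C0:ℂ)) := by
      rw [← hQform ((t:ℂ)+1), ← heval ((t:ℂ)+1), ← hTeq p, h0, map_zero]
    have e1 : ((t:ℂ)+1 - (t:ℂ)) = 1 := by ring
    rw [e1, one_pow, one_mul] at h1
    have h2 : ((A*(t+1)^2 + B*(t+1) + C0 : ℝ) : ℂ) = 0 := by
      push_cast
      linear_combination -h1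
    exact hQtpos.ne' (Complex.ofReal_eq_zero.mp h2)
  have hpreal : RealRooted p := by
    right
    intro w hw
    rw [hp] at hw
    simp only [map_pow, map_sub, aeval_X, aeval_C, Complex.coe_algebraMap] at hw
    have h1 : w - (t:ℂ) = 0 := pow_eq_zero_iff (by omega) |>.mp hw
    have h2 : w = (t:ℂ) := sub_eq_zero.mp h1
    rw [h2]
    exact Complex.ofReal_im t
  have hTroot : (Polynomial.aeval z) (T p) = 0 := by
    rw [hTeq, heval z, hQform z, hQz, mul_zero]
  rcases hpres p hpreal with h0 | hall
  · exact hTp0 h0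
  · have := hall z hTroot
    rw [hzim] at this
    exact hy1pos.ne' this
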